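/- Let f : P → Q be a lattice homomorphism (preserving binary meets and joins) between lattices. Then the induced map [f] : [P] → [Q] sends atomic cospans in [P] to atomic cospans in [Q]. -/
import Mathlib


/-- An interval in a poset `P` is a pair `(a, a')` with `a ≤ a'`. -/
def PIvl (P : Type*) [PartialOrder P] : Type _ := {p : P × P // p.1 ≤ p.2}

/-- Intervals are partially ordered by the precision relation:
`[a,a'] ≤ [b,b']` iff `[a,a'] ⊇ [b,b']` iff `a ≤ b` and `b' ≤ a'`. -/
instance {P : Type*} [PartialOrder P] : PartialOrder (PIvl P) where
  le x y := x.1.1 ≤ y.1.1 ∧ y.1.2 ≤ x.1.2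
  le_refl x := ⟨le_refl _, le_refl _⟩
  le_trans x y z h h' := ⟨h.1.trans h'.1, h'.2.trans h.2⟩
  le_antisymm x y h h' :=
    Subtype.ext (Prod.ext (le_antisymm h.1 h'.1) (le_antisymm h'.2 h.2))

/-- In a poset (a thin category), a cospan `x ⊇ b ⊆ y` is atomic iff every `z` with
`x ⊇ z`, `y ⊇ z` and `z ⊇ b` equals `b`. -/
def IsAtomicCospan {α : Type*} [PartialOrder α] (x b y : α) : Prop :=
  x ≤ b ∧ y ≤ b ∧ ∀ z, x ≤ z → y ≤ z → z ≤ b → z = b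

/-- The interval map `[f]` induced by a lattice homomorphism `f`. -/
def intervalMap {P Q : Type*} [Lattice P] [Lattice Q] (f : LatticeHom P Q) :
    PIvl P → PIvl Q :=
  fun x => ⟨(f x.1.1, f x.1.2), (OrderHomClass.monotone f) x.2⟩

/-- A lattice homomorphism `f : P → Q` induces a map `[f] : [P] → [Q]` which sends atomic
cospans in `[P]` to atomic cospans in `[Q]`. -/
theorem intervalMap_preserves_atomicCospan {P Q : Type*} [Lattice P] [Lattice Q]
    (f : LatticeHom P Q) (x b y : PIvl P) :
    IsAtomicCospan x b y →
      IsAtomicCospan (intervalMap f x) (intervalMap f b) (intervalMap f y) := by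
  rintro ⟨hx, hy, hmax⟩
  -- First identify b as [x₁ ⊔ y₁, x₂ ⊓ y₂]
  have hz : (⟨(x.1.1 ⊔ y.1.1, x.1.2 ⊓ y.1.2),
      le_trans (sup_le hx.1 hy.1) (le_trans b.2 (le_inf hx.2 hy.2))⟩ : PIvl P) = b :=
    hmax _ ⟨le_sup_left, inf_le_left⟩ ⟨le_sup_right, inf_le_right⟩
      ⟨sup_le hx.1 hy.1, le_inf hx.2 hy.2⟩
  have hb1 : b.1.1 = x.1.1 ⊔ y.1.1 := by rw [← hz]
  have hb2 : b.1.2 = x.1.2 ⊓ y.1.2 := by rw [← hz]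
  refine ⟨⟨?_, ?_⟩, ⟨?_, ?_⟩, ?_⟩
  · show f x.1.1 ≤ f b.1.1; rw [hb1, map_sup]; exact le_sup_left
  · show f b.1.2 ≤ f x.1.2; rw [hb2, map_inf]; exact inf_le_left
  · show f y.1.1 ≤ f b.1.1; rw [hb1, map_sup]; exact le_sup_right
  · show f b.1.2 ≤ f y.1.2; rw [hb2, map_inf]; exact inf_le_right
  · rintro w ⟨hw1, hw2⟩ ⟨hw3, hw4⟩ ⟨hw5, hw6⟩
    apply Subtype.ext
    apply Prod.ext
    · refine le_antisymm hw5 ?_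
      show f b.1.1 ≤ w.1.1
      rw [hb1, map_sup]
      exact sup_le hw1 hw3
    · refine le_antisymm ?_ hw6
      show w.1.2 ≤ f b.1.2
      rw [hb2, map_inf]
      exact le_inf hw2 hw4
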